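/- arXiv:2308.00263 — 4 statements merged into one kernel-verified Lean document; each statement's English description precedes it below -/
import Mathlib

section
/- Let (Ω, μ) be a probability space, d ≥ 1, δ ∈ (0, 1], and η_g a real number. Let (x^t)_{t≥0}, (x̂^t)_{t≥0}, (Δ^t)_{t≥0} be sequences of square-integrable random vectors in ℝ^d such that (i) x̂^0 = x^0 almost surely, (ii) x^{t+1} = x^t + η_g Δ^t almost surely for every t, (iii) E[‖x̂^{t+1} − x^{t+1}‖²] ≤ (1 − δ) E[‖x^{t+1} − x̂^t‖²] for every t, and (iv) E[⟨x^t − x̂^t, Δ^t⟩] = 0 for every t. Then for every t ≥ 0: E[‖x^t − x̂^t‖²] ≤ η_g² ∑_{s=0}^{t−1} (1 − δ)^{t−s} E[‖Δ^s‖²]. -/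
open MeasureTheory
open scoped RealInnerProductSpace

private lemma my_int_normsq {Ω : Type*} [MeasurableSpace Ω] {μ : Measure Ω} {d : ℕ}
    {f : Ω → EuclideanSpace ℝ (Fin d)} (hf : MemLp f 2 μ) :
    Integrable (fun ω => ‖f ω‖ ^ 2) μ :=
  (memLp_two_iff_integrable_sq_norm hf.1).mp hf

private lemma my_int_inner {Ω : Type*} [MeasurableSpace Ω] {μ : Measure Ω} {d : ℕ}
    {f g : Ω → EuclideanSpace ℝ (Fin d)} (hf : MemLp f 2 μ) (hg : MemLp g 2 μ) :
    Integrable (fun ω => ⟪f ω, g ω⟫) μ := by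
  refine Integrable.mono' ((my_int_normsq hf).add (my_int_normsq hg)) (hf.1.inner hg.1) ?_
  filter_upwards with ω
  calc ‖⟪f ω, g ω⟫‖ ≤ ‖f ω‖ * ‖g ω‖ := norm_inner_le_norm _ _
    _ ≤ ‖f ω‖ ^ 2 + ‖g ω‖ ^ 2 := by nlinarith [sq_nonneg (‖f ω‖ - ‖g ω‖), sq_nonneg (‖f ω‖ + ‖g ω‖)]

/-- Lemma A.4 of the paper: hidden state bound with an unbiased quantizer. -/
theorem hidden_state_bound_unbiased
    {Ω : Type*} [MeasurableSpace Ω] (μ : Measure Ω) [IsProbabilityMeasure μ]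
    (d : ℕ) (hd : 1 ≤ d) (δ : ℝ) (hδ : δ ∈ Set.Ioc (0 : ℝ) 1) (ηg : ℝ)
    (x xh Δ : ℕ → Ω → EuclideanSpace ℝ (Fin d))
    (hxL2 : ∀ t, MemLp (x t) 2 μ)
    (hxhL2 : ∀ t, MemLp (xh t) 2 μ)
    (hΔL2 : ∀ t, MemLp (Δ t) 2 μ)
    (h0 : ∀ᵐ ω ∂μ, xh 0 ω = x 0 ω)
    (hstep : ∀ t, ∀ᵐ ω ∂μ, x (t + 1) ω = x t ω + ηg • Δ t ω)
    (hcomp : ∀ t, ∫ ω, ‖xh (t + 1) ω - x (t + 1) ω‖ ^ 2 ∂μ ≤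
      (1 - δ) * ∫ ω, ‖x (t + 1) ω - xh t ω‖ ^ 2 ∂μ)
    (horth : ∀ t, ∫ ω, ⟪x t ω - xh t ω, Δ t ω⟫ ∂μ = 0) :
    ∀ t, ∫ ω, ‖x t ω - xh t ω‖ ^ 2 ∂μ ≤
      ηg ^ 2 * ∑ s ∈ Finset.range t, (1 - δ) ^ (t - s) * ∫ ω, ‖Δ s ω‖ ^ 2 ∂μ := by
  obtain ⟨hδ0, hδ1⟩ := hδ
  have h1δ : (0:ℝ) ≤ 1 - δ := by linarith
  intro t
  induction t with
  | zero =>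
    simp only [Finset.range_zero, Finset.sum_empty, mul_zero]
    have : ∫ ω, ‖x 0 ω - xh 0 ω‖ ^ 2 ∂μ = 0 := by
      have hint : Integrable (fun ω => ‖x 0 ω - xh 0 ω‖ ^ 2) μ := by
        simpa [Pi.sub_apply] using my_int_normsq ((hxL2 0).sub (hxhL2 0))
      rw [integral_eq_zero_iff_of_nonneg (fun ω => sq_nonneg _) hint]
      filter_upwards [h0] with ω hω
      simp [hω]
    simp [this]
  | succ t ih =>
    set D : ℕ → ℝ := fun s => ∫ ω, ‖Δ s ω‖ ^ 2 ∂μ with hD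
    have hDnn : ∀ s, 0 ≤ D s := fun s => integral_nonneg fun ω => sq_nonneg _
    -- expansion of the cross term
    have hexp : ∫ ω, ‖x (t + 1) ω - xh t ω‖ ^ 2 ∂μ =
        (∫ ω, ‖x t ω - xh t ω‖ ^ 2 ∂μ) + ηg ^ 2 * D t := by
      have hmd := (hxL2 t).sub (hxhL2 t)
      have hint1 : Integrable (fun ω => ‖x t ω - xh t ω‖ ^ 2) μ := by
        simpa [Pi.sub_apply] using my_int_normsq hmd
      have hint2 : Integrable (fun ω => ⟪x t ω - xh t ω, Δ t ω⟫) μ := by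
        simpa [Pi.sub_apply] using my_int_inner hmd (hΔL2 t)
      have hcongr : ∫ ω, ‖x (t + 1) ω - xh t ω‖ ^ 2 ∂μ =
          ∫ ω, (‖x t ω - xh t ω‖ ^ 2 + (2 * ηg) * ⟪x t ω - xh t ω, Δ t ω⟫
            + ηg ^ 2 * ‖Δ t ω‖ ^ 2) ∂μ := by
        refine integral_congr_ae ?_
        filter_upwards [hstep t] with ω hω
        have : x (t + 1) ω - xh t ω = (x t ω - xh t ω) + ηg • Δ t ω := by
          rw [hω]; abel
        rw [this, norm_add_sq_real, real_inner_smul_right, norm_smul, mul_pow, Real.norm_eq_abs, sq_abs]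
        ring
      rw [hcongr]
      rw [integral_add (f := fun ω => ‖x t ω - xh t ω‖ ^ 2 + 2 * ηg * ⟪x t ω - xh t ω, Δ t ω⟫)
          (g := fun ω => ηg ^ 2 * ‖Δ t ω‖ ^ 2)
          (hint1.add (hint2.const_mul (2 * ηg))) ((my_int_normsq (hΔL2 t)).const_mul (ηg ^ 2))]
      rw [integral_add (f := fun ω => ‖x t ω - xh t ω‖ ^ 2)
          (g := fun ω => 2 * ηg * ⟪x t ω - xh t ω, Δ t ω⟫) hint1 (hint2.const_mul (2 * ηg))]
      rw [integral_const_mul, integral_const_mul, horth t]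
      ring
    have hrev : ∫ ω, ‖x (t + 1) ω - xh (t + 1) ω‖ ^ 2 ∂μ =
        ∫ ω, ‖xh (t + 1) ω - x (t + 1) ω‖ ^ 2 ∂μ := by
      refine integral_congr_ae ?_
      filter_upwards with ω
      rw [norm_sub_rev]
    calc ∫ ω, ‖x (t + 1) ω - xh (t + 1) ω‖ ^ 2 ∂μ
        ≤ (1 - δ) * ∫ ω, ‖x (t + 1) ω - xh t ω‖ ^ 2 ∂μ := by rw [hrev]; exact hcomp t
      _ = (1 - δ) * ((∫ ω, ‖x t ω - xh t ω‖ ^ 2 ∂μ) + ηg ^ 2 * D t) := by rw [hexp]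
      _ ≤ (1 - δ) * (ηg ^ 2 * ∑ s ∈ Finset.range t, (1 - δ) ^ (t - s) * D s + ηg ^ 2 * D t) := by
          apply mul_le_mul_of_nonneg_left _ h1δ
          exact add_le_add_left ih _
      _ = ηg ^ 2 * ∑ s ∈ Finset.range (t + 1), (1 - δ) ^ (t + 1 - s) * D s := by
          rw [Finset.sum_range_succ]
          have : ∀ s ∈ Finset.range t, (1 - δ) ^ (t + 1 - s) * D s
              = (1 - δ) * ((1 - δ) ^ (t - s) * D s) := by
            intro s hs
            rw [Finset.mem_range] at hs
            rw [show t + 1 - s = (t - s) + 1 by omega, pow_succ]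
            ring
          rw [Finset.sum_congr rfl this, ← Finset.mul_sum]
          have ht1 : t + 1 - t = 1 := by omega
          rw [ht1, pow_one]
          ring
end

section
/- Let (Ω, μ) be a probability space, d ≥ 1, δ ∈ (0, 1], and η_g a real number. Let (x^t)_{t≥0}, (x̂^t)_{t≥0}, (Δ^t)_{t≥0} be sequences of square-integrable random vectors in ℝ^d such that (i) x̂^0 = x^0 almost surely, (ii) x^{t+1} = x^t + η_g Δ^t almost surely for every t, and (iii) E[‖x̂^{t+1} − x^{t+1}‖²] ≤ (1 − δ) E[‖x^{t+1} − x̂^t‖²] for every t. Then for every t ≥ 0: E[‖x^t − x̂^t‖²] ≤ (2/δ) η_g² ∑_{s=0}^{t−1} (1 − δ/2)^{t−1−s} E[‖Δ^s‖²]. -/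
open MeasureTheory

lemma aux_pt (δ a b : ℝ) (hδ0 : 0 < δ) (hδ1 : δ ≤ 1) (ha : 0 ≤ a) (hb : 0 ≤ b) :
    (1 - δ) * (a + b) ^ 2 ≤ (1 - δ / 2) * a ^ 2 + (2 / δ) * b ^ 2 := by
  have h : δ * ((1 - δ) * (a + b) ^ 2) ≤ δ * ((1 - δ / 2) * a ^ 2) + 2 * b ^ 2 := by
    nlinarith [sq_nonneg (δ * a - 2 * (1 - δ) * b),
      mul_nonneg (mul_nonneg hδ0.le (by linarith : (0:ℝ) ≤ 3 - δ)) (sq_nonneg b)]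
  have h2 : (1 - δ) * (a + b) ^ 2 ≤ (δ * ((1 - δ / 2) * a ^ 2) + 2 * b ^ 2) / δ := by
    rw [le_div_iff₀ hδ0]; linarith
  calc (1 - δ) * (a + b) ^ 2 ≤ (δ * ((1 - δ / 2) * a ^ 2) + 2 * b ^ 2) / δ := h2
    _ = (1 - δ / 2) * a ^ 2 + (2 / δ) * b ^ 2 := by field_simp

lemma aux_vec {E : Type*} [NormedAddCommGroup E] (δ : ℝ) (hδ0 : 0 < δ) (hδ1 : δ ≤ 1)
    (u v : E) : (1 - δ) * ‖u + v‖ ^ 2 ≤ (1 - δ / 2) * ‖u‖ ^ 2 + (2 / δ) * ‖v‖ ^ 2 := by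
  calc (1 - δ) * ‖u + v‖ ^ 2 ≤ (1 - δ) * (‖u‖ + ‖v‖) ^ 2 := by
        apply mul_le_mul_of_nonneg_left _ (by linarith)
        exact pow_le_pow_left₀ (norm_nonneg _) (norm_add_le u v) 2
    _ ≤ (1 - δ / 2) * ‖u‖ ^ 2 + (2 / δ) * ‖v‖ ^ 2 :=
        aux_pt δ _ _ hδ0 hδ1 (norm_nonneg _) (norm_nonneg _)

/-- Lemma A.6 of the paper: hidden state bound with a general (possibly biased) quantizer. -/
theorem hidden_state_bound_general
    {Ω : Type*} [MeasurableSpace Ω] (μ : Measure Ω) [IsProbabilityMeasure μ]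
    (d : ℕ) (hd : 1 ≤ d) (δ : ℝ) (hδ : δ ∈ Set.Ioc (0 : ℝ) 1) (ηg : ℝ)
    (x xh Δ : ℕ → Ω → EuclideanSpace ℝ (Fin d))
    (hxL2 : ∀ t, MemLp (x t) 2 μ)
    (hxhL2 : ∀ t, MemLp (xh t) 2 μ)
    (hΔL2 : ∀ t, MemLp (Δ t) 2 μ)
    (h0 : ∀ᵐ ω ∂μ, xh 0 ω = x 0 ω)
    (hstep : ∀ t, ∀ᵐ ω ∂μ, x (t + 1) ω = x t ω + ηg • Δ t ω)
    (hcomp : ∀ t, ∫ ω, ‖xh (t + 1) ω - x (t + 1) ω‖ ^ 2 ∂μ ≤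
      (1 - δ) * ∫ ω, ‖x (t + 1) ω - xh t ω‖ ^ 2 ∂μ) :
    ∀ t, ∫ ω, ‖x t ω - xh t ω‖ ^ 2 ∂μ ≤
      (2 / δ) * ηg ^ 2 * ∑ s ∈ Finset.range t, (1 - δ / 2) ^ (t - 1 - s) * ∫ ω, ‖Δ s ω‖ ^ 2 ∂μ := by
  obtain ⟨hδ0, hδ1⟩ := hδ
  have hInt : ∀ (f : Ω → EuclideanSpace ℝ (Fin d)), MemLp f 2 μ →
      Integrable (fun ω => ‖f ω‖ ^ 2) μ := fun f hf => hf.norm.integrable_sq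
  have hIΔ : ∀ s, Integrable (fun ω => ‖Δ s ω‖ ^ 2) μ := fun s => hInt _ (hΔL2 s)
  have hIΔnn : ∀ s, 0 ≤ ∫ ω, ‖Δ s ω‖ ^ 2 ∂μ := fun s =>
    integral_nonneg fun ω => sq_nonneg _
  intro t
  induction t with
  | zero =>
    have h : (fun ω => ‖x 0 ω - xh 0 ω‖ ^ 2) =ᵐ[μ] (fun _ => (0 : ℝ)) :=
      h0.mono fun ω hω => by simp [hω]
    rw [integral_congr_ae h]
    simp
  | succ t ih =>
    have hI1 : Integrable (fun ω => ‖x (t + 1) ω - xh (t + 1) ω‖ ^ 2) μ :=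
      hInt _ ((hxL2 _).sub (hxhL2 _))
    have hI2 : Integrable (fun ω => ‖x (t + 1) ω - xh t ω‖ ^ 2) μ :=
      hInt _ ((hxL2 _).sub (hxhL2 _))
    have hIu : Integrable (fun ω => ‖x t ω - xh t ω‖ ^ 2) μ :=
      hInt _ ((hxL2 _).sub (hxhL2 _))
    -- step 1: contraction
    have heq0 : ∫ ω, ‖xh (t + 1) ω - x (t + 1) ω‖ ^ 2 ∂μ
        = ∫ ω, ‖x (t + 1) ω - xh (t + 1) ω‖ ^ 2 ∂μ := by
      apply integral_congr_ae
      filter_upwards with ω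
      rw [norm_sub_rev]
    have step1 : ∫ ω, ‖x (t + 1) ω - xh (t + 1) ω‖ ^ 2 ∂μ ≤
        (1 - δ) * ∫ ω, ‖x (t + 1) ω - xh t ω‖ ^ 2 ∂μ := heq0 ▸ hcomp t
    -- rewrite using the step relation
    have haeq : (fun ω => ‖x (t + 1) ω - xh t ω‖ ^ 2) =ᵐ[μ]
        (fun ω => ‖(x t ω - xh t ω) + ηg • Δ t ω‖ ^ 2) :=
      (hstep t).mono fun ω hω => by simp only [hω]; congr 2; abel
    have hI2' : Integrable (fun ω => ‖(x t ω - xh t ω) + ηg • Δ t ω‖ ^ 2) μ :=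
      hI2.congr haeq
    have hIrhs : Integrable
        (fun ω => (1 - δ / 2) * ‖x t ω - xh t ω‖ ^ 2 + (2 / δ) * (ηg ^ 2 * ‖Δ t ω‖ ^ 2)) μ :=
      (hIu.const_mul _).add (((hIΔ t).const_mul _).const_mul _)
    have step2 : (1 - δ) * ∫ ω, ‖x (t + 1) ω - xh t ω‖ ^ 2 ∂μ ≤
        (1 - δ / 2) * ∫ ω, ‖x t ω - xh t ω‖ ^ 2 ∂μ + (2 / δ) * ηg ^ 2 * ∫ ω, ‖Δ t ω‖ ^ 2 ∂μ := by
      rw [integral_congr_ae haeq, ← integral_const_mul]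
      calc ∫ ω, (1 - δ) * ‖(x t ω - xh t ω) + ηg • Δ t ω‖ ^ 2 ∂μ
          ≤ ∫ ω, ((1 - δ / 2) * ‖x t ω - xh t ω‖ ^ 2 + (2 / δ) * (ηg ^ 2 * ‖Δ t ω‖ ^ 2)) ∂μ := by
            apply integral_mono (hI2'.const_mul _) hIrhs
            intro ω
            have := aux_vec δ hδ0 hδ1 (x t ω - xh t ω) (ηg • Δ t ω)
            have hn : ‖ηg • Δ t ω‖ ^ 2 = ηg ^ 2 * ‖Δ t ω‖ ^ 2 := by
              rw [norm_smul, mul_pow, Real.norm_eq_abs, sq_abs]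
            simpa [hn] using this
        _ = (1 - δ / 2) * ∫ ω, ‖x t ω - xh t ω‖ ^ 2 ∂μ
              + (2 / δ) * ηg ^ 2 * ∫ ω, ‖Δ t ω‖ ^ 2 ∂μ := by
            rw [integral_add (hIu.const_mul _) (((hIΔ t).const_mul _).const_mul _),
              integral_const_mul, integral_const_mul, integral_const_mul]
            ring
    -- combine with induction hypothesis
    have h12 : (0 : ℝ) ≤ 1 - δ / 2 := by linarith
    have hmain : ∫ ω, ‖x (t + 1) ω - xh (t + 1) ω‖ ^ 2 ∂μ ≤
        (1 - δ / 2) * ((2 / δ) * ηg ^ 2 *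
          ∑ s ∈ Finset.range t, (1 - δ / 2) ^ (t - 1 - s) * ∫ ω, ‖Δ s ω‖ ^ 2 ∂μ)
        + (2 / δ) * ηg ^ 2 * ∫ ω, ‖Δ t ω‖ ^ 2 ∂μ := by
      have := mul_le_mul_of_nonneg_left ih h12
      linarith [step1.trans step2]
    refine hmain.trans (le_of_eq ?_)
    rw [Finset.sum_range_succ]
    have hsum : ∑ s ∈ Finset.range t, (1 - δ / 2) ^ (t + 1 - 1 - s) * ∫ ω, ‖Δ s ω‖ ^ 2 ∂μ
        = ∑ s ∈ Finset.range t, (1 - δ / 2) * ((1 - δ / 2) ^ (t - 1 - s) * ∫ ω, ‖Δ s ω‖ ^ 2 ∂μ) := by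
      apply Finset.sum_congr rfl
      intro s hs
      have hst : s < t := Finset.mem_range.mp hs
      have : t + 1 - 1 - s = (t - 1 - s) + 1 := by omega
      rw [this, pow_succ]
      ring
    rw [hsum, ← Finset.mul_sum]
    have : t + 1 - 1 - t = 0 := by omega
    rw [this, pow_zero]
    ring
end

section
/- Let (Ω, μ) be a probability space, d ≥ 1, δ_c ∈ (0, 1], let η > 0 be real, let K ≥ 1 and τ ≥ 1 be natural numbers, and let B ≥ 0. For each index i in a finite set of size τ·K, let u_i : Ω → ℝ^d be a square-integrable random vector with E[‖u_i‖²] ≤ B, and let Q_i : Ω → ℝ^d be square-integrable random vectors such that (i) E[‖Q_i − u_i‖²] ≤ (1 − δ_c) E[‖u_i‖²] for every i, (ii) E[⟨Q_i − u_i, Q_j − u_j⟩] = 0 whenever i ≠ j, and (iii) E[⟨Q_i − u_i, ∑_j u_j⟩] = 0 for every i. Then E[‖(η/K) ∑_i Q_i‖²] ≤ η² τ² B (1 + (1 − δ_c)/(K·τ)). -/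
open MeasureTheory
open scoped RealInnerProductSpace

lemma my_integrable_inner {Ω : Type*} [MeasurableSpace Ω] {μ : Measure Ω}
    {E : Type*} [NormedAddCommGroup E] [InnerProductSpace ℝ E]
    {f g : Ω → E} (hf : MemLp f 2 μ) (hg : MemLp g 2 μ) :
    Integrable (fun ω => ⟪f ω, g ω⟫) μ := by
  have h := MeasureTheory.L2.integrable_inner (𝕜 := ℝ) (hf.toLp f) (hg.toLp g)
  refine h.congr ?_
  filter_upwards [hf.coeFn_toLp, hg.coeFn_toLp] with ω h1 h2
  rw [h1, h2]

lemma my_integrable_sq {Ω : Type*} [MeasurableSpace Ω] {μ : Measure Ω}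
    {E : Type*} [NormedAddCommGroup E] [InnerProductSpace ℝ E]
    {f : Ω → E} (hf : MemLp f 2 μ) :
    Integrable (fun ω => ‖f ω‖ ^ 2) μ :=
  (my_integrable_inner hf hf).congr
    (Filter.Eventually.of_forall fun ω => real_inner_self_eq_norm_sq _)

/-- Staleness bound of the paper (Appendix E, bound-staleness). -/
theorem staleness_bound
    {Ω : Type*} [MeasurableSpace Ω] (μ : Measure Ω) [IsProbabilityMeasure μ]
    (d : ℕ) (hd : 1 ≤ d) (δc : ℝ) (hδc : δc ∈ Set.Ioc (0 : ℝ) 1)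
    (η : ℝ) (hη : 0 < η) (K τ : ℕ) (hK : 1 ≤ K) (hτ : 1 ≤ τ)
    (B : ℝ) (hB : 0 ≤ B)
    (u Q : Fin (τ * K) → Ω → EuclideanSpace ℝ (Fin d))
    (huL2 : ∀ i, MemLp (u i) 2 μ) (hQL2 : ∀ i, MemLp (Q i) 2 μ)
    (hubd : ∀ i, ∫ ω, ‖u i ω‖ ^ 2 ∂μ ≤ B)
    (hcomp : ∀ i, ∫ ω, ‖Q i ω - u i ω‖ ^ 2 ∂μ ≤ (1 - δc) * ∫ ω, ‖u i ω‖ ^ 2 ∂μ)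
    (huncorr : ∀ i j, i ≠ j → ∫ ω, ⟪Q i ω - u i ω, Q j ω - u j ω⟫ ∂μ = 0)
    (horth : ∀ i, ∫ ω, ⟪Q i ω - u i ω, ∑ j, u j ω⟫ ∂μ = 0) :
    ∫ ω, ‖(η / (K : ℝ)) • ∑ i, Q i ω‖ ^ 2 ∂μ ≤
      η ^ 2 * (τ : ℝ) ^ 2 * B * (1 + (1 - δc) / ((K : ℝ) * (τ : ℝ))) := by
  obtain ⟨hδ0, hδ1⟩ := hδc
  have hK0 : (0 : ℝ) < K := by exact_mod_cast hK
  have hτ0 : (0 : ℝ) < τ := by exact_mod_cast hτ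
  have h1δ : (0 : ℝ) ≤ 1 - δc := by linarith
  set e : Fin (τ * K) → Ω → EuclideanSpace ℝ (Fin d) :=
    fun i ω => Q i ω - u i ω with he
  have heL2 : ∀ i, MemLp (e i) 2 μ := fun i => (hQL2 i).sub (huL2 i)
  have hSuL2 : MemLp (fun ω => ∑ i, u i ω) 2 μ := by
    have h := memLp_finset_sum' (μ := μ) Finset.univ (fun i (_ : i ∈ Finset.univ) => huL2 i)
    have heq : (∑ i : Fin (τ * K), u i) = fun ω => ∑ i, u i ω := by
      ext ω; simp [Finset.sum_apply]
    rwa [heq] at h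
  have hSeL2 : MemLp (fun ω => ∑ i, e i ω) 2 μ := by
    have h := memLp_finset_sum' (μ := μ) Finset.univ (fun i (_ : i ∈ Finset.univ) => heL2 i)
    have heq : (∑ i : Fin (τ * K), e i) = fun ω => ∑ i, e i ω := by
      ext ω; simp [Finset.sum_apply]
    rwa [heq] at h
  have hint_u : ∀ i, Integrable (fun ω => ‖u i ω‖ ^ 2) μ :=
    fun i => my_integrable_sq (huL2 i)
  have hint_e : ∀ i, Integrable (fun ω => ‖e i ω‖ ^ 2) μ :=
    fun i => my_integrable_sq (heL2 i)
  have hint_Su : Integrable (fun ω => ‖∑ i, u i ω‖ ^ 2) μ := my_integrable_sq hSuL2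
  have hint_Se : Integrable (fun ω => ‖∑ i, e i ω‖ ^ 2) μ := my_integrable_sq hSeL2
  have hint_cross : Integrable (fun ω => ⟪∑ i, u i ω, ∑ i, e i ω⟫) μ :=
    my_integrable_inner hSuL2 hSeL2
  have hsum_u : ∑ i, ∫ ω, ‖u i ω‖ ^ 2 ∂μ ≤ ((τ * K : ℕ) : ℝ) * B := by
    calc ∑ i : Fin (τ * K), ∫ ω, ‖u i ω‖ ^ 2 ∂μ ≤ ∑ _i : Fin (τ * K), B :=
          Finset.sum_le_sum (fun i _ => hubd i)
      _ = ((τ * K : ℕ) : ℝ) * B := by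
          simp [Finset.sum_const, Finset.card_univ, nsmul_eq_mul]
  -- Bound on the u-sum second moment
  have hA : ∫ ω, ‖∑ i, u i ω‖ ^ 2 ∂μ ≤ ((τ * K : ℕ) : ℝ) ^ 2 * B := by
    have hpt : ∀ ω, ‖∑ i, u i ω‖ ^ 2 ≤ ((τ * K : ℕ) : ℝ) * ∑ i, ‖u i ω‖ ^ 2 := by
      intro ω
      calc ‖∑ i, u i ω‖ ^ 2 ≤ (∑ i, ‖u i ω‖) ^ 2 := by
            exact pow_le_pow_left₀ (norm_nonneg _)
              (norm_sum_le Finset.univ (fun i => u i ω)) 2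
        _ ≤ (Finset.univ.card : ℝ) * ∑ i, ‖u i ω‖ ^ 2 := sq_sum_le_card_mul_sum_sq
        _ = ((τ * K : ℕ) : ℝ) * ∑ i, ‖u i ω‖ ^ 2 := by simp
    calc ∫ ω, ‖∑ i, u i ω‖ ^ 2 ∂μ
        ≤ ∫ ω, ((τ * K : ℕ) : ℝ) * ∑ i, ‖u i ω‖ ^ 2 ∂μ :=
          integral_mono hint_Su
            ((integrable_finset_sum _ (fun i _ => hint_u i)).const_mul _) hpt
      _ = ((τ * K : ℕ) : ℝ) * ∑ i, ∫ ω, ‖u i ω‖ ^ 2 ∂μ := by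
          rw [integral_const_mul, integral_finset_sum _ (fun i _ => hint_u i)]
      _ ≤ ((τ * K : ℕ) : ℝ) * (((τ * K : ℕ) : ℝ) * B) :=
          mul_le_mul_of_nonneg_left hsum_u (by positivity)
      _ = ((τ * K : ℕ) : ℝ) ^ 2 * B := by ring
  -- Bound on the error-sum second moment
  have hC : ∫ ω, ‖∑ i, e i ω‖ ^ 2 ∂μ ≤ (1 - δc) * (((τ * K : ℕ) : ℝ) * B) := by
    have hexp : ∫ ω, ‖∑ i, e i ω‖ ^ 2 ∂μ = ∑ i, ∫ ω, ‖e i ω‖ ^ 2 ∂μ := by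
      have h1 : ∀ ω, ‖∑ i, e i ω‖ ^ 2 = ∑ i, ∑ j, ⟪e i ω, e j ω⟫ := by
        intro ω
        rw [← real_inner_self_eq_norm_sq, sum_inner]
        exact Finset.sum_congr rfl fun i _ => inner_sum _ _ _
      calc ∫ ω, ‖∑ i, e i ω‖ ^ 2 ∂μ
          = ∫ ω, ∑ i, ∑ j, ⟪e i ω, e j ω⟫ ∂μ :=
            integral_congr_ae (Filter.Eventually.of_forall h1)
        _ = ∑ i, ∑ j, ∫ ω, ⟪e i ω, e j ω⟫ ∂μ := by
            rw [integral_finset_sum _ (fun i _ =>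
              integrable_finset_sum _ (fun j _ => my_integrable_inner (heL2 i) (heL2 j)))]
            exact Finset.sum_congr rfl fun i _ =>
              integral_finset_sum _ (fun j _ => my_integrable_inner (heL2 i) (heL2 j))
        _ = ∑ i, ∫ ω, ‖e i ω‖ ^ 2 ∂μ := by
            refine Finset.sum_congr rfl fun i _ => ?_
            rw [Finset.sum_eq_single i]
            · exact integral_congr_ae (Filter.Eventually.of_forall fun ω =>
                real_inner_self_eq_norm_sq _)
            · intro j _ hj
              exact huncorr i j (Ne.symm hj)
            · intro h; exact absurd (Finset.mem_univ i) h
    rw [hexp]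
    calc ∑ i, ∫ ω, ‖e i ω‖ ^ 2 ∂μ
        ≤ ∑ i, (1 - δc) * ∫ ω, ‖u i ω‖ ^ 2 ∂μ :=
          Finset.sum_le_sum fun i _ => hcomp i
      _ = (1 - δc) * ∑ i, ∫ ω, ‖u i ω‖ ^ 2 ∂μ := by rw [Finset.mul_sum]
      _ ≤ (1 - δc) * (((τ * K : ℕ) : ℝ) * B) := mul_le_mul_of_nonneg_left hsum_u h1δ
  -- Cross term vanishes
  have hX : ∫ ω, ⟪∑ i, u i ω, ∑ i, e i ω⟫ ∂μ = 0 := by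
    have h1 : ∀ ω, ⟪∑ i, u i ω, ∑ i, e i ω⟫ = ∑ i, ⟪e i ω, ∑ j, u j ω⟫ := by
      intro ω
      rw [real_inner_comm, sum_inner]
    calc ∫ ω, ⟪∑ i, u i ω, ∑ i, e i ω⟫ ∂μ
        = ∑ i, ∫ ω, ⟪e i ω, ∑ j, u j ω⟫ ∂μ := by
          rw [integral_congr_ae (Filter.Eventually.of_forall h1)]
          exact integral_finset_sum _ (fun i _ => my_integrable_inner (heL2 i) hSuL2)
      _ = 0 := Finset.sum_eq_zero fun i _ => horth i
  -- Split the Q-sum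
  have hint_fg : Integrable
      (fun ω => ‖∑ i, u i ω‖ ^ 2 + 2 * ⟪∑ i, u i ω, ∑ i, e i ω⟫) μ :=
    hint_Su.add (hint_cross.const_mul 2)
  have hint_c2 : Integrable (fun ω => 2 * ⟪∑ i, u i ω, ∑ i, e i ω⟫) μ :=
    hint_cross.const_mul 2
  have hsplit : ∫ ω, ‖∑ i, Q i ω‖ ^ 2 ∂μ =
      ∫ ω, ‖∑ i, u i ω‖ ^ 2 ∂μ + 2 * ∫ ω, ⟪∑ i, u i ω, ∑ i, e i ω⟫ ∂μ +
      ∫ ω, ‖∑ i, e i ω‖ ^ 2 ∂μ := by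
    have h1 : ∀ ω, ‖∑ i, Q i ω‖ ^ 2 =
        ‖∑ i, u i ω‖ ^ 2 + 2 * ⟪∑ i, u i ω, ∑ i, e i ω⟫ + ‖∑ i, e i ω‖ ^ 2 := by
      intro ω
      have hQsum : ∑ i, Q i ω = (∑ i, u i ω) + ∑ i, e i ω := by
        rw [← Finset.sum_add_distrib]
        exact Finset.sum_congr rfl fun i _ => by simp [he]
      rw [hQsum, norm_add_sq_real]
    rw [integral_congr_ae (Filter.Eventually.of_forall h1),
      integral_add hint_fg hint_Se, integral_add hint_Su hint_c2, integral_const_mul]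
  have hQbd : ∫ ω, ‖∑ i, Q i ω‖ ^ 2 ∂μ ≤
      ((τ * K : ℕ) : ℝ) ^ 2 * B + (1 - δc) * (((τ * K : ℕ) : ℝ) * B) := by
    rw [hsplit, hX]
    linarith
  have hscale : ∫ ω, ‖(η / (K : ℝ)) • ∑ i, Q i ω‖ ^ 2 ∂μ =
      (η / (K : ℝ)) ^ 2 * ∫ ω, ‖∑ i, Q i ω‖ ^ 2 ∂μ := by
    simp_rw [norm_smul, mul_pow, Real.norm_eq_abs, sq_abs]
    rw [integral_const_mul]
  rw [hscale]
  have hnR : ((τ * K : ℕ) : ℝ) = (τ : ℝ) * (K : ℝ) := by push_cast; ring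
  calc (η / (K : ℝ)) ^ 2 * ∫ ω, ‖∑ i, Q i ω‖ ^ 2 ∂μ
      ≤ (η / (K : ℝ)) ^ 2 *
          (((τ * K : ℕ) : ℝ) ^ 2 * B + (1 - δc) * (((τ * K : ℕ) : ℝ) * B)) :=
        mul_le_mul_of_nonneg_left hQbd (by positivity)
    _ = η ^ 2 * (τ : ℝ) ^ 2 * B * (1 + (1 - δc) / ((K : ℝ) * (τ : ℝ))) := by
        rw [hnR]; field_simp
end

section
/- Let L > 0, let P ≥ 1 and K ≥ 1 be natural numbers, let δ_c, δ_s ∈ (0, 1], and let η_g be a real number with 0 < η_g ≤ 1/L. Let η_ℓ^{(0)}, …, η_ℓ^{(P−1)} be nonnegative reals satisfying η_ℓ^{(p)} ≤ min( K / (2P(K + 1 − δ_c)), δ_s² / (12P) ) for every p, and set α_P := ∑_{p=0}^{P−1} η_ℓ^{(p)}. Then for every p with 0 ≤ p ≤ P − 1: ( 12 L² η_g² α_P / δ_s² + L η_g ) · ( 1 + (1 − δ_c)/K ) · P · η_ℓ^{(p)} ≤ 1. -/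
/-- The simple learning-rate bounds suffice for Condition (15) of the paper
(possibly biased server quantizer). -/
theorem condition_learning_rates_biased
    (L : ℝ) (hL : 0 < L) (P K : ℕ) (hP : 1 ≤ P) (hK : 1 ≤ K)
    (δc δs : ℝ) (hδc : δc ∈ Set.Ioc (0 : ℝ) 1) (hδs : δs ∈ Set.Ioc (0 : ℝ) 1)
    (ηg : ℝ) (hηg : 0 < ηg) (hηgL : ηg ≤ 1 / L)
    (ηl : Fin P → ℝ) (hηl0 : ∀ p, 0 ≤ ηl p)
    (hηl : ∀ p, ηl p ≤ min ((K : ℝ) / (2 * (P : ℝ) * ((K : ℝ) + 1 - δc)))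
      (δs ^ 2 / (12 * (P : ℝ)))) :
    ∀ p : Fin P,
      (12 * L ^ 2 * ηg ^ 2 * (∑ q, ηl q) / δs ^ 2 + L * ηg) *
        (1 + (1 - δc) / (K : ℝ)) * (P : ℝ) * ηl p ≤ 1 := by
  intro p
  obtain ⟨hδc0, hδc1⟩ := hδc
  obtain ⟨hδs0, hδs1⟩ := hδs
  have hP0 : (0:ℝ) < P := by exact_mod_cast hP
  have hK0 : (0:ℝ) < K := by exact_mod_cast hK
  have hKc : (0:ℝ) < (K:ℝ) + 1 - δc := by linarith
  have hLg : L * ηg ≤ 1 := by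
    rw [le_div_iff₀ hL] at hηgL; linarith [hηgL]
  have hLg0 : 0 < L * ηg := mul_pos hL hηg
  have hsum : (∑ q, ηl q) ≤ δs ^ 2 / 12 := by
    calc (∑ q, ηl q) ≤ ∑ _q : Fin P, δs ^ 2 / (12 * (P:ℝ)) :=
          Finset.sum_le_sum fun q _ => le_trans (hηl q) (min_le_right _ _)
      _ = (P:ℝ) * (δs ^ 2 / (12 * (P:ℝ))) := by
          rw [Finset.sum_const, Finset.card_univ, Fintype.card_fin]; ring
      _ = δs ^ 2 / 12 := by field_simp
  have hsum0 : 0 ≤ (∑ q, ηl q) := Finset.sum_nonneg fun q _ => hηl0 q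
  have hA : 12 * L ^ 2 * ηg ^ 2 * (∑ q, ηl q) / δs ^ 2 + L * ηg ≤ 2 := by
    have h1 : 12 * L ^ 2 * ηg ^ 2 * (∑ q, ηl q) / δs ^ 2 ≤ L ^ 2 * ηg ^ 2 := by
      rw [div_le_iff₀ (by positivity)]
      nlinarith [sq_nonneg (L * ηg), sq_nonneg δs]
    nlinarith [sq_nonneg (L * ηg - 1)]
  have hC : (P:ℝ) * ηl p ≤ (K:ℝ) / (2 * ((K:ℝ) + 1 - δc)) := by
    have h2 := le_trans (hηl p) (min_le_left _ _)
    calc (P:ℝ) * ηl p ≤ (P:ℝ) * ((K:ℝ) / (2 * (P:ℝ) * ((K:ℝ) + 1 - δc))) :=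
          mul_le_mul_of_nonneg_left h2 hP0.le
      _ = (K:ℝ) / (2 * ((K:ℝ) + 1 - δc)) := by field_simp
  have hC0 : 0 ≤ (P:ℝ) * ηl p := mul_nonneg hP0.le (hηl0 p)
  have hB0 : 0 ≤ 1 + (1 - δc) / (K:ℝ) := by
    have : 0 ≤ (1 - δc) / (K:ℝ) := div_nonneg (by linarith) hK0.le
    linarith
  calc (12 * L ^ 2 * ηg ^ 2 * (∑ q, ηl q) / δs ^ 2 + L * ηg) *
        (1 + (1 - δc) / (K : ℝ)) * (P : ℝ) * ηl p
      = (12 * L ^ 2 * ηg ^ 2 * (∑ q, ηl q) / δs ^ 2 + L * ηg) *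
        (1 + (1 - δc) / (K : ℝ)) * ((P : ℝ) * ηl p) := by ring
    _ ≤ 2 * (1 + (1 - δc) / (K : ℝ)) * ((K:ℝ) / (2 * ((K:ℝ) + 1 - δc))) := by
        apply mul_le_mul (mul_le_mul_of_nonneg_right hA hB0) hC hC0
        positivity
    _ = 1 := by field_simp; ring
end
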